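/- arXiv:2312.11846 — 5 statements merged into one kernel-verified Lean document; each statement's English description precedes it below -/
import Mathlib

section
/- The Huber loss satisfies the approximate triangle inequality with constant 1/3: for all theta, phi_i, phi_j in R^d, (1/3) H(theta - phi_i) \le H(theta - phi_j) + H(phi_i - phi_j), where H(u) = (1/2)\|u\|^2 if \|u\| \le delta and H(u) = delta(\|u\| - delta/2) otherwise. -/
theorem huber_approx_triangle {E : Type*} [SeminormedAddCommGroup E]
    (delta : ℝ) (hdelta : 0 < delta)
    (H : E → ℝ)
    (hH : ∀ u : E, H u = if ‖u‖ ≤ delta then (1 / 2) * ‖u‖ ^ 2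
                          else delta * (‖u‖ - delta / 2))
    (theta phi_i phi_j : E) :
    (1 / 3 : ℝ) * H (theta - phi_i) ≤ H (theta - phi_j) + H (phi_i - phi_j) := by
  have key : ‖theta - phi_i‖ ≤ ‖theta - phi_j‖ + ‖phi_i - phi_j‖ := by
    have : theta - phi_i = (theta - phi_j) - (phi_i - phi_j) := by abel
    rw [this]
    exact norm_sub_le _ _
  rw [hH, hH, hH]
  set x := ‖theta - phi_i‖ with hx
  set s := ‖theta - phi_j‖ with hs
  set t := ‖phi_i - phi_j‖ with ht
  have hx0 : 0 ≤ x := norm_nonneg _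
  have hs0 : 0 ≤ s := norm_nonneg _
  have ht0 : 0 ≤ t := norm_nonneg _
  split_ifs with h1 h2 h3 h4 h5 h6 h7
  · nlinarith [sq_nonneg (s - t), sq_nonneg (s + t - x), sq_nonneg x]
  · nlinarith [sq_nonneg s, sq_nonneg x, mul_le_mul_of_nonneg_left h1 hdelta.le]
  · nlinarith [sq_nonneg t, sq_nonneg x, mul_le_mul_of_nonneg_left h1 hdelta.le]
  · nlinarith [sq_nonneg x, mul_le_mul_of_nonneg_left h1 hdelta.le]
  · nlinarith [sq_nonneg (s - t), sq_nonneg (s + t - x), sq_nonneg (3 * x - 2 * delta),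
      mul_le_mul_of_nonneg_left key hdelta.le]
  · nlinarith [sq_nonneg (s - delta), mul_le_mul_of_nonneg_left key hdelta.le,
      mul_lt_mul_of_pos_left (not_le.mp h6) hdelta]
  · nlinarith [sq_nonneg (t - delta), mul_le_mul_of_nonneg_left key hdelta.le,
      mul_lt_mul_of_pos_left (not_le.mp h5) hdelta]
  · nlinarith [mul_le_mul_of_nonneg_left key hdelta.le,
      mul_lt_mul_of_pos_left (not_le.mp h5) hdelta, mul_lt_mul_of_pos_left (not_le.mp h7) hdelta]
end

section
/- Let A_i, A_j be symmetric positive definite matrices and let c = (1/2) lambda, where lambda is the largest scalar such that A_i - lambda A_j and A_j - lambda A_i are both positive semidefinite. Then for all theta, phi_i, phi_j in R^d: c \|theta - phi_i\|_{A_i}^2 \le \|theta - phi_j\|_{A_j}^2 + \|phi_i - phi_j\|_{A_j}^2. -/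
open Matrix

theorem mahalanobis_approx_triangle_i {d : ℕ}
    (Ai Aj : Matrix (Fin d) (Fin d) ℝ)
    (hAi : Ai.PosDef) (hAj : Aj.PosDef)
    (lam : ℝ)
    (hlam : IsGreatest {c : ℝ | (Ai - c • Aj).PosSemidef ∧ (Aj - c • Ai).PosSemidef} lam)
    (c : ℝ) (hc : c = (1 / 2) * lam) :
    ∀ theta phi_i phi_j : Fin d → ℝ,
      c * ((theta - phi_i) ⬝ᵥ Ai.mulVec (theta - phi_i)) ≤
        (theta - phi_j) ⬝ᵥ Aj.mulVec (theta - phi_j) +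
          (phi_i - phi_j) ⬝ᵥ Aj.mulVec (phi_i - phi_j) := by
  intro theta phi_i phi_j
  set a := theta - phi_j with ha
  set b := phi_i - phi_j with hb
  have hu : theta - phi_i = a - b := by rw [ha, hb]; abel
  have hkey : ∀ u : Fin d → ℝ, lam * (u ⬝ᵥ Ai.mulVec u) ≤ u ⬝ᵥ Aj.mulVec u := by
    intro u
    have h := hlam.1.2.dotProduct_mulVec_nonneg u
    simp only [sub_mulVec, smul_mulVec, dotProduct_sub, dotProduct_smul,
      smul_eq_mul, star_trivial] at h
    linarith
  have hsum : 0 ≤ (a + b) ⬝ᵥ Aj.mulVec (a + b) := by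
    have := hAj.posSemidef.dotProduct_mulVec_nonneg (a + b)
    simpa using this
  have hsym : b ⬝ᵥ Aj.mulVec a = a ⬝ᵥ Aj.mulVec b := by
    have ht : Ajᵀ = Aj := hAj.posSemidef.1.eq
    rw [dotProduct_mulVec, ← mulVec_transpose, ht, dotProduct_comm]
  have hexp1 : (a + b) ⬝ᵥ Aj.mulVec (a + b) =
      a ⬝ᵥ Aj.mulVec a + 2 * (a ⬝ᵥ Aj.mulVec b) + b ⬝ᵥ Aj.mulVec b := by
    simp only [mulVec_add, dotProduct_add, add_dotProduct, hsym]
    ring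
  have hexp2 : (a - b) ⬝ᵥ Aj.mulVec (a - b) =
      a ⬝ᵥ Aj.mulVec a - 2 * (a ⬝ᵥ Aj.mulVec b) + b ⬝ᵥ Aj.mulVec b := by
    simp only [mulVec_sub, dotProduct_sub, sub_dotProduct, hsym]
    ring
  have h2 : (a - b) ⬝ᵥ Aj.mulVec (a - b) ≤
      2 * (a ⬝ᵥ Aj.mulVec a + b ⬝ᵥ Aj.mulVec b) := by
    rw [hexp2]; rw [hexp1] at hsum; linarith
  have hk := hkey (a - b)
  rw [hu, hc]
  linarith
end

section
/- Let A_i, A_j be symmetric positive definite matrices and c = (1/2) lambda with lambda as the largest scalar such that A_i - lambda A_j and A_j - lambda A_i are positive semidefinite. Then for all theta, phi_i, phi_j in R^d: c \|phi_j - phi_i\|_{A_i}^2 \le \|theta - phi_j\|_{A_j}^2 + \|theta - phi_i\|_{A_i}^2. -/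
open Matrix

private lemma quad_parallelogram {d : ℕ} (A : Matrix (Fin d) (Fin d) ℝ) (a b : Fin d → ℝ) :
    (a - b) ⬝ᵥ A.mulVec (a - b) + (a + b) ⬝ᵥ A.mulVec (a + b) =
      2 * (a ⬝ᵥ A.mulVec a) + 2 * (b ⬝ᵥ A.mulVec b) := by
  simp [Matrix.mulVec_add, Matrix.mulVec_sub, dotProduct_add, dotProduct_sub,
    add_dotProduct, sub_dotProduct]
  ring

private lemma psd_quad {d : ℕ} {M : Matrix (Fin d) (Fin d) ℝ} (hM : M.PosSemidef)
    (x : Fin d → ℝ) : 0 ≤ x ⬝ᵥ M.mulVec x := by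
  have := hM.dotProduct_mulVec_nonneg x
  simpa using this

theorem mahalanobis_approx_triangle_ii {d : ℕ}
    (Ai Aj : Matrix (Fin d) (Fin d) ℝ)
    (hAi : Ai.PosDef) (hAj : Aj.PosDef)
    (lam : ℝ)
    (hlam : IsGreatest {c : ℝ | (Ai - c • Aj).PosSemidef ∧ (Aj - c • Ai).PosSemidef} lam)
    (c : ℝ) (hc : c = (1 / 2) * lam) :
    ∀ theta phi_i phi_j : Fin d → ℝ,
      c * ((phi_j - phi_i) ⬝ᵥ Ai.mulVec (phi_j - phi_i)) ≤
        (theta - phi_j) ⬝ᵥ Aj.mulVec (theta - phi_j) +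
          (theta - phi_i) ⬝ᵥ Ai.mulVec (theta - phi_i) := by
  intro theta phi_i phi_j
  -- lam ≥ 0
  have h0mem : (0 : ℝ) ∈ {c : ℝ | (Ai - c • Aj).PosSemidef ∧ (Aj - c • Ai).PosSemidef} := by
    constructor <;> simpa using (by first | exact hAi.posSemidef | exact hAj.posSemidef)
  have hlam0 : 0 ≤ lam := hlam.2 h0mem
  set u := theta - phi_i with hu
  set v := theta - phi_j with hv
  have huv : phi_j - phi_i = u - v := by
    funext k
    simp [hu, hv]
  rw [huv]
  -- lam ≤ 1 (when d > 0; if d = 0 everything is trivial)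
  rcases Nat.eq_zero_or_pos d with hd | hd
  · subst hd
    simp [dotProduct]
  have hlam1 : lam ≤ 1 := by
    by_contra h
    push_neg at h
    obtain ⟨x, hx⟩ : ∃ x : Fin d → ℝ, x ≠ 0 :=
      ⟨fun _ => 1, by
        intro hcon
        have := congrFun hcon ⟨0, hd⟩
        simpa using this⟩
    have hsum : 0 < x ⬝ᵥ (Ai + Aj).mulVec x := by
      have h1 := hAi.dotProduct_mulVec_pos hx
      have h2 := hAj.dotProduct_mulVec_pos hx
      have : 0 < x ⬝ᵥ Ai.mulVec x + x ⬝ᵥ Aj.mulVec x := by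
        simp at h1 h2; linarith
      simpa [Matrix.add_mulVec, dotProduct_add] using this
    have hq1 := psd_quad hlam.1.1 x
    have hq2 := psd_quad hlam.1.2 x
    rw [Matrix.sub_mulVec, dotProduct_sub] at hq1 hq2
    have hsmul1 : x ⬝ᵥ (lam • Aj).mulVec x = lam * (x ⬝ᵥ Aj.mulVec x) := by
      simp [Matrix.smul_mulVec, dotProduct_smul]
    have hsmul2 : x ⬝ᵥ (lam • Ai).mulVec x = lam * (x ⬝ᵥ Ai.mulVec x) := by
      simp [Matrix.smul_mulVec, dotProduct_smul]
    rw [hsmul1] at hq1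
    rw [hsmul2] at hq2
    rw [Matrix.add_mulVec, dotProduct_add] at hsum
    nlinarith
  -- key inequalities
  have hpar := quad_parallelogram Ai u v
  have hplus := psd_quad hAi.posSemidef (u + v)
  have hQu := psd_quad hAi.posSemidef u
  have hQv := psd_quad hAi.posSemidef v
  have hj := psd_quad hlam.1.2 v
  rw [Matrix.sub_mulVec, dotProduct_sub, Matrix.smul_mulVec, dotProduct_smul,
    smul_eq_mul] at hj
  nlinarith [mul_nonneg hlam0 hplus, mul_nonneg (sub_nonneg.2 hlam1) hQu]
end

section
/- Let B be a finite nonempty set of indices with points phi_j in R^d and loss functions L_i satisfying: for every j, i in B and the minimizer J of theta \mapsto \sum_{l \in B} L_l(theta, phi_l) over R^d, c_{ij} L_i(phi_j, phi_i) \le L_j(J, phi_j) + L_i(J, phi_i), with c_{ij} = c_{ji} > 0. If a center theta = phi_j is chosen uniformly at random from B, then E[\sum_{i \in B} L_i(theta, phi_i)] \le (max_{j \in B} (2/|B|) \sum_{i \in B} 1/c_{ij}) * \sum_{i \in B} L_i(J, phi_i). -/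
theorem uniform_seeding_bound {ι : Type*} [DecidableEq ι] {d : ℕ}
    (B : Finset ι) (hB : B.Nonempty)
    (phi : ι → EuclideanSpace ℝ (Fin d))
    (L : ι → EuclideanSpace ℝ (Fin d) → ℝ)
    (hL_nonneg : ∀ i θ, 0 ≤ L i θ)
    (c : ι → ι → ℝ)
    (hc_pos : ∀ i ∈ B, ∀ j ∈ B, 0 < c i j)
    (hc_symm : ∀ i j, c i j = c j i)
    (J : EuclideanSpace ℝ (Fin d))
    (hJ : ∀ θ, ∑ l ∈ B, L l J ≤ ∑ l ∈ B, L l θ)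
    (htri : ∀ i ∈ B, ∀ j ∈ B, c i j * L i (phi j) ≤ L j J + L i J) :
    (1 / (B.card : ℝ)) * ∑ j ∈ B, ∑ i ∈ B, L i (phi j) ≤
      (B.sup' hB fun j => (2 / (B.card : ℝ)) * ∑ i ∈ B, 1 / c i j) *
        ∑ i ∈ B, L i J := by
  set n : ℝ := (B.card : ℝ) with hn'
  have hn : 0 < n := by rw [hn']; exact_mod_cast Finset.card_pos.mpr hB
  set M := B.sup' hB fun j => (2 / n) * ∑ i ∈ B, 1 / c i j with hM
  have key : ∀ j ∈ B, ∀ i ∈ B, L i (phi j) ≤ (L j J + L i J) / c i j := by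
    intro j hj i hi
    rw [le_div_iff₀ (hc_pos i hi j hj), mul_comm]
    exact htri i hi j hj
  calc (1/n) * ∑ j ∈ B, ∑ i ∈ B, L i (phi j)
      ≤ (1/n) * ∑ j ∈ B, ∑ i ∈ B, (L j J + L i J) / c i j := by
        apply mul_le_mul_of_nonneg_left _ (by positivity)
        exact Finset.sum_le_sum fun j hj =>
          Finset.sum_le_sum fun i hi => key j hj i hi
    _ = ∑ j ∈ B, (L j J * ((2/n) * ∑ i ∈ B, 1 / c i j)) := by
        have swap : ∑ j ∈ B, ∑ i ∈ B, L i J / c i j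
            = ∑ j ∈ B, ∑ i ∈ B, L j J / c i j := by
          rw [Finset.sum_comm]
          refine Finset.sum_congr rfl fun j hj =>
            Finset.sum_congr rfl fun i hi => ?_
          rw [hc_symm]
        have h1 : ∑ j ∈ B, ∑ i ∈ B, (L j J + L i J) / c i j
            = 2 * ∑ j ∈ B, (L j J * ∑ i ∈ B, 1 / c i j) := by
          simp only [add_div, Finset.sum_add_distrib, swap]
          rw [two_mul]
          congr 1 <;>
          · refine Finset.sum_congr rfl fun j hj => ?_
            rw [Finset.mul_sum]
            exact Finset.sum_congr rfl fun i hi => by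
              rw [one_div, div_eq_mul_inv]
        rw [h1, Finset.mul_sum, Finset.mul_sum]
        exact Finset.sum_congr rfl fun j hj => by ring
    _ ≤ ∑ j ∈ B, (L j J * M) :=
        Finset.sum_le_sum fun j hj =>
          mul_le_mul_of_nonneg_left
            (hM ▸ Finset.le_sup' (fun j => (2/n) * ∑ i ∈ B, 1 / c i j) hj)
            (hL_nonneg j J)
    _ = M * ∑ i ∈ B, L i J := by rw [← Finset.sum_mul, mul_comm]
end

section
/- Let B be a finite nonempty index set with nonnegative losses L_i(\cdot, phi_i) satisfying the symmetric approximate triangle inequality c_{ji} L_j(theta, phi_j) \le L_i(theta, phi_i) + L_i(phi_j, phi_i) for all theta, with c_{ij} = c_{ji} > 0. Let Theta_t be any finite set of existing centers, with current loss L_i(Theta_t, phi_i) = min_{theta in Theta_t} L_i(theta, phi_i). If a new center theta = phi_j is sampled from B with probability proportional to L_j(Theta_t, phi_j), then E[\sum_{i \in B} min(L_i(Theta_t, phi_i), L_i(phi_j, phi_i))] \le \sum_{j \in B} (2/\sum_{i \in B} c_{ij}) \sum_{i \in B} L_i(phi_j, phi_i). -/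
theorem adaptive_sampling_bound {ι : Type*} [DecidableEq ι] {d : ℕ}
    (B : Finset ι) (hB : B.Nonempty)
    (phi : ι → EuclideanSpace ℝ (Fin d))
    (L : ι → EuclideanSpace ℝ (Fin d) → ℝ)
    (hL_nonneg : ∀ i θ, 0 ≤ L i θ)
    (c : ι → ι → ℝ)
    (hc_pos : ∀ i ∈ B, ∀ j ∈ B, 0 < c i j)
    (hc_symm : ∀ i j, c i j = c j i)
    (htri : ∀ i ∈ B, ∀ j ∈ B, ∀ θ, c j i * L j θ ≤ L i θ + L i (phi j))
    (T : Finset (EuclideanSpace ℝ (Fin d))) (hT : T.Nonempty)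
    (D : ι → ℝ)
    (hD : ∀ i, D i = T.inf' hT (fun θ => L i θ))
    (W : ℝ) (hW : W = ∑ j ∈ B, D j) (hWpos : 0 < W) :
    ∑ j ∈ B, (D j / W) * ∑ i ∈ B, min (D i) (L i (phi j)) ≤
      ∑ j ∈ B, (2 / ∑ i ∈ B, c i j) * ∑ i ∈ B, L i (phi j) := by
  have hDnn : ∀ i, 0 ≤ D i := by
    intro i
    rw [hD]
    obtain ⟨θ, hθ, hθe⟩ := T.exists_mem_eq_inf' hT (fun θ => L i θ)
    rw [hθe]; exact hL_nonneg i θ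
  apply Finset.sum_le_sum
  intro j hj
  set S := ∑ i ∈ B, min (D i) (L i (phi j)) with hS
  set Λ := ∑ i ∈ B, L i (phi j) with hΛ
  set C := ∑ i ∈ B, c i j with hC
  have hCpos : 0 < C := Finset.sum_pos (fun i hi => hc_pos i hi j hj) hB
  have hSle1 : S ≤ Λ := Finset.sum_le_sum (fun i _ => min_le_right _ _)
  have hSle2 : S ≤ W := by
    rw [hW]; exact Finset.sum_le_sum (fun i _ => min_le_left _ _)
  have hSnn : 0 ≤ S := Finset.sum_nonneg (fun i _ => le_min (hDnn i) (hL_nonneg i _))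
  have hΛnn : 0 ≤ Λ := Finset.sum_nonneg (fun i _ => hL_nonneg i _)
  have key : C * D j ≤ W + Λ := by
    calc C * D j = ∑ i ∈ B, c i j * D j := Finset.sum_mul ..
      _ ≤ ∑ i ∈ B, (D i + L i (phi j)) := by
          apply Finset.sum_le_sum
          intro i hi
          obtain ⟨θ, hθ, hθe⟩ := T.exists_mem_eq_inf' hT (fun θ => L i θ)
          have hDj : D j ≤ L j θ := by rw [hD]; exact Finset.inf'_le _ hθ
          have h1 : c i j * D j ≤ c i j * L j θ :=
            mul_le_mul_of_nonneg_left hDj (hc_pos i hi j hj).le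
          have h2 : c j i * L j θ ≤ L i θ + L i (phi j) := htri i hi j hj θ
          rw [hc_symm i j] at h1 ⊢
          have : D i = L i θ := by rw [hD, hθe]
          linarith
      _ = W + Λ := by rw [Finset.sum_add_distrib, hW, hΛ]
  rw [div_mul_eq_mul_div, div_mul_eq_mul_div, div_le_div_iff₀ hWpos hCpos]
  nlinarith [mul_le_mul_of_nonneg_right key hSnn,
    mul_le_mul_of_nonneg_left hSle1 hWpos.le,
    mul_le_mul_of_nonneg_left hSle2 hΛnn]
end
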